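/- arXiv:1803.08391 — 4 statements merged into one kernel-verified Lean document; each statement's English description precedes it below -/
import Mathlib

section
/- Let r₁,…,rₙ ∈ ℂ (n ≥ 1) be distinct, let m₁,…,mₙ be positive integers, and set P = ∏_{i=1}^n(X−rᵢ)^{mᵢ} ∈ ℂ[X]. Then P′ = D·Q, where D = ∏_{i=1}^n(X−rᵢ)^{mᵢ−1} and Q = ∑_{i=1}^n mᵢ∏_{j≠i}(X−rⱼ); the polynomial Q satisfies Q(rᵢ) ≠ 0 for every i; and the greatest common divisor of X·P′ − P and P′ in ℂ[X] is associated (equal up to multiplication by a nonzero constant) to D. In other words, the Newton map of P, written as the quotient (X·P′−P)/P′, has common factor exactly ∏(X−rᵢ)^{mᵢ−1}, so its depth at each rᵢ equals mᵢ − 1. -/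
open Finset Polynomial

lemma derivative_finset_prod' {ι : Type*} [DecidableEq ι] (s : Finset ι) (f : ι → Polynomial ℂ) :
    Polynomial.derivative (∏ i ∈ s, f i) =
      ∑ i ∈ s, (∏ j ∈ s.erase i, f j) * Polynomial.derivative (f i) := by
  classical
  induction s using Finset.induction_on with
  | empty => simp
  | @insert a s ha ih =>
    rw [Finset.prod_insert ha, derivative_mul, Finset.sum_insert ha, Finset.erase_insert ha,
      ih, Finset.mul_sum]
    congr 1
    · exact mul_comm _ _
    · refine Finset.sum_congr rfl fun i hi => ?_
      rw [Finset.erase_insert_of_ne (by rintro rfl; exact ha hi),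
        Finset.prod_insert (fun h => ha (Finset.mem_of_mem_erase h))]
      ring

/-- For `P = ∏ i (X - rᵢ)^{mᵢ}` with `r₁, …, rₙ` distinct (`n ≥ 1`) and `mᵢ ≥ 1`:
`P' = D * Q` where `D = ∏ i (X - rᵢ)^{mᵢ - 1}` and `Q = ∑ i mᵢ ∏_{j≠i} (X - rⱼ)`,
the polynomial `Q` does not vanish at any `rᵢ`, and `gcd (X*P' - P) P'` is
associated to `D` (so the Newton map of `P` has depth `mᵢ - 1` at each `rᵢ`). -/
theorem newton_common_factor
    (n : ℕ) (hn : 1 ≤ n) (r : Fin n → ℂ) (hr : Function.Injective r)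
    (m : Fin n → ℕ) (hm : ∀ i, 0 < m i)
    (P D Q : Polynomial ℂ)
    (hP : P = ∏ i : Fin n, (X - C (r i)) ^ (m i))
    (hD : D = ∏ i : Fin n, (X - C (r i)) ^ (m i - 1))
    (hQ : Q = ∑ i : Fin n, C ((m i : ℂ)) * ∏ j ∈ univ.erase i, (X - C (r j))) :
    P.derivative = D * Q ∧
    (∀ i : Fin n, Q.eval (r i) ≠ 0) ∧
    Associated (EuclideanDomain.gcd (X * P.derivative - P) P.derivative) D := by
  set E : Polynomial ℂ := ∏ i : Fin n, (X - C (r i)) with hE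
  -- key identity for each i
  have key : ∀ i : Fin n, D * ∏ j ∈ univ.erase i, (X - C (r j)) =
      (∏ j ∈ univ.erase i, (X - C (r j)) ^ (m j)) * (X - C (r i)) ^ (m i - 1) := by
    intro i
    have hprod : (∏ j ∈ univ.erase i, (X - C (r j)) ^ (m j - 1)) *
        ∏ j ∈ univ.erase i, (X - C (r j)) = ∏ j ∈ univ.erase i, (X - C (r j)) ^ (m j) := by
      rw [← Finset.prod_mul_distrib]
      exact prod_congr rfl fun j _ => by rw [← pow_succ, Nat.sub_add_cancel (hm j)]
    rw [hD, ← Finset.mul_prod_erase univ _ (mem_univ i), mul_assoc, hprod, mul_comm]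
  -- derivative
  have hder : P.derivative = D * Q := by
    rw [hP, derivative_finset_prod', hQ, Finset.mul_sum]
    refine sum_congr rfl fun i _ => ?_
    rw [derivative_pow, derivative_X_sub_C]
    linear_combination (-(C ((m i : ℂ)))) * key i
  -- Q does not vanish at rᵢ
  have hQne : ∀ i : Fin n, Q.eval (r i) ≠ 0 := by
    intro i
    rw [hQ]
    simp only [eval_finset_sum, eval_mul, eval_C, eval_prod, eval_sub, eval_X]
    rw [Finset.sum_eq_single i]
    · apply mul_ne_zero
      · exact_mod_cast (hm i).ne'
      · refine Finset.prod_ne_zero_iff.mpr fun j hj => ?_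
        exact sub_ne_zero.mpr fun h => (Finset.mem_erase.mp hj).1 (hr h).symm
    · intro k _ hk
      apply mul_eq_zero_of_right
      exact Finset.prod_eq_zero (Finset.mem_erase.mpr ⟨fun h => hk h.symm, mem_univ i⟩)
        (by simp)
    · intro h; exact absurd (mem_univ i) h
  refine ⟨hder, hQne, ?_⟩
  -- P = D * E
  have hPDE : P = D * E := by
    rw [hP, hD, hE, ← Finset.prod_mul_distrib]
    refine prod_congr rfl fun i _ => ?_
    rw [← pow_succ, Nat.sub_add_cancel (hm i)]
  have hnum : X * P.derivative - P = D * (X * Q - E) := by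
    rw [hder, hPDE]; ring
  -- coprimality of X*Q - E and Q
  have hcop : IsCoprime (X * Q - E) Q := by
    rw [Polynomial.isCoprime_iff_aeval_ne_zero_of_isAlgClosed (k := ℂ) (K := ℂ)]
    intro a
    by_contra h
    push_neg at h
    obtain ⟨h1, h2⟩ := h
    rw [show (aeval a : Polynomial ℂ → ℂ) = eval a from Polynomial.coe_aeval_eq_eval a] at h1 h2
    have hQ0 : Q.eval a = 0 := h2
    have hE0 : E.eval a = 0 := by
      rw [eval_sub, eval_mul, eval_X, hQ0, mul_zero, zero_sub, neg_eq_zero] at h1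
      exact h1
    rw [hE, eval_prod, Finset.prod_eq_zero_iff] at hE0
    obtain ⟨i, -, hi⟩ := hE0
    rw [eval_sub, eval_X, eval_C, sub_eq_zero] at hi
    exact hQne i (hi ▸ hQ0)
  -- conclude
  obtain ⟨u, v, huv⟩ := hcop
  apply associated_of_dvd_dvd
  · have h1 : EuclideanDomain.gcd (X * P.derivative - P) P.derivative ∣ D * (X * Q - E) := by
      rw [← hnum]; exact EuclideanDomain.gcd_dvd_left _ _
    have h2 : EuclideanDomain.gcd (X * P.derivative - P) P.derivative ∣ D * Q := by
      rw [← hder]; exact EuclideanDomain.gcd_dvd_right _ _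
    have hDeq : D = u * (D * (X * Q - E)) + v * (D * Q) := by
      linear_combination (-D) * huv
    rw [hDeq]
    exact dvd_add (Dvd.dvd.mul_left h1 u) (Dvd.dvd.mul_left h2 v)
  · exact EuclideanDomain.dvd_gcd (hnum ▸ dvd_mul_right D _) (hder ▸ dvd_mul_right D _)
end

section
/- Let P and Q be nonconstant monic polynomials in ℂ[X]. If their Newton maps agree wherever both are defined, i.e. z − P(z)/P′(z) = z − Q(z)/Q′(z) for every z ∈ ℂ with P′(z) ≠ 0 and Q′(z) ≠ 0, then P = Q. -/
/-- For a complex polynomial of positive degree, the natDegree and leading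
coefficient of its derivative. -/
lemma deriv_natDegree_leadingCoeff (p : Polynomial ℂ) (hp : p.natDegree ≠ 0) :
    p.derivative.natDegree = p.natDegree - 1 ∧
    p.derivative.leadingCoeff = p.leadingCoeff * p.natDegree := by
  have hp0 : p ≠ 0 := fun h => hp (by simp [h])
  have hn : p.natDegree - 1 + 1 = p.natDegree := Nat.succ_pred_eq_of_pos (Nat.pos_of_ne_zero hp)
  have hc : p.derivative.coeff (p.natDegree - 1) = p.leadingCoeff * p.natDegree := by
    rw [Polynomial.coeff_derivative, hn]
    congr 1
    exact_mod_cast congrArg (Nat.cast : ℕ → ℂ) hn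
  have hne : p.derivative.coeff (p.natDegree - 1) ≠ 0 := by
    rw [hc]
    exact mul_ne_zero (Polynomial.leadingCoeff_ne_zero.2 hp0) (Nat.cast_ne_zero.2 hp)
  have hdeg : p.derivative.natDegree = p.natDegree - 1 :=
    le_antisymm (Polynomial.natDegree_derivative_le p) (Polynomial.le_natDegree_of_ne_zero hne)
  refine ⟨hdeg, ?_⟩
  rw [Polynomial.leadingCoeff, hdeg, hc]

/-- Two nonconstant monic complex polynomials whose Newton maps agree wherever
both are defined are equal. -/
theorem newton_map_determines_monic_polynomial
    (P Q : Polynomial ℂ) (hPm : P.Monic) (hQm : Q.Monic)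
    (hPd : 0 < P.natDegree) (hQd : 0 < Q.natDegree)
    (h : ∀ z : ℂ, Polynomial.eval z P.derivative ≠ 0 →
      Polynomial.eval z Q.derivative ≠ 0 →
      z - P.eval z / Polynomial.eval z P.derivative
        = z - Q.eval z / Polynomial.eval z Q.derivative) :
    P = Q := by
  have hP0 : P ≠ 0 := hPm.ne_zero
  have hQ0 : Q ≠ 0 := hQm.ne_zero
  have hPnd : P.natDegree ≠ 0 := hPd.ne'
  have hQnd : Q.natDegree ≠ 0 := hQd.ne'
  have hP' : P.derivative ≠ 0 := fun h0 =>
    hPnd (Polynomial.natDegree_eq_zero_of_derivative_eq_zero h0)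
  have hQ' : Q.derivative ≠ 0 := fun h0 =>
    hQnd (Polynomial.natDegree_eq_zero_of_derivative_eq_zero h0)
  obtain ⟨hPdd, hPlc⟩ := deriv_natDegree_leadingCoeff P hPnd
  obtain ⟨hQdd, hQlc⟩ := deriv_natDegree_leadingCoeff Q hQnd
  -- Key polynomial identity: P * Q' = Q * P'
  have key : P * Q.derivative = Q * P.derivative := by
    have hD : P * Q.derivative - Q * P.derivative = 0 := by
      apply Polynomial.eq_zero_of_infinite_isRoot
      have hfin : ({x | Polynomial.IsRoot P.derivative x} ∪
          {x | Polynomial.IsRoot Q.derivative x}).Finite :=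
        (Polynomial.finite_setOf_isRoot hP').union (Polynomial.finite_setOf_isRoot hQ')
      apply Set.Infinite.mono _ hfin.infinite_compl
      intro z hz
      simp only [Set.mem_compl_iff, Set.mem_union, Set.mem_setOf_eq, not_or] at hz
      obtain ⟨hz1, hz2⟩ := hz
      have heq : P.eval z / Polynomial.eval z P.derivative
          = Q.eval z / Polynomial.eval z Q.derivative := (sub_right_inj).1 (h z hz1 hz2)
      have hmul : P.eval z * Polynomial.eval z Q.derivative
          = Q.eval z * Polynomial.eval z P.derivative :=
        (div_eq_div_iff hz1 hz2).1 heq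
      simp only [Set.mem_setOf_eq, Polynomial.IsRoot, Polynomial.eval_sub,
        Polynomial.eval_mul]
      linear_combination hmul
    exact sub_eq_zero.1 hD
  -- Equal degrees
  have hdegC : (Q.natDegree : ℂ) = P.natDegree := by
    have hlc := congrArg Polynomial.leadingCoeff key
    rw [Polynomial.leadingCoeff_mul, Polynomial.leadingCoeff_mul, hPlc, hQlc,
      hPm.leadingCoeff, hQm.leadingCoeff] at hlc
    simpa using hlc
  have hmn : Q.natDegree = P.natDegree := Nat.cast_injective hdegC
  -- Consider R = P - Q
  by_contra hne
  have hR0 : P - Q ≠ 0 := sub_ne_zero.2 hne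
  have key2 : P * (P - Q).derivative = (P - Q) * P.derivative := by
    rw [Polynomial.derivative_sub]
    ring_nf
    linear_combination -key
  have hdeglt : (P - Q).degree < P.degree := by
    apply Polynomial.degree_sub_lt _ hP0
    · rw [hPm.leadingCoeff, hQm.leadingCoeff]
    · rw [Polynomial.degree_eq_natDegree hP0, Polynomial.degree_eq_natDegree hQ0, hmn]
  by_cases hR' : (P - Q).derivative = 0
  · have hz : (P - Q) * P.derivative = 0 := by rw [← key2, hR', mul_zero]
    rcases mul_eq_zero.1 hz with h1 | h1
    · exact hR0 h1
    · exact hP' h1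
  · have hRnd : (P - Q).natDegree ≠ 0 := fun h0 => by
      rw [Polynomial.eq_C_of_natDegree_eq_zero h0] at hR'
      simp at hR'
    obtain ⟨hRdd, hRlc⟩ := deriv_natDegree_leadingCoeff (P - Q) hRnd
    have hlc2 := congrArg Polynomial.leadingCoeff key2
    rw [Polynomial.leadingCoeff_mul, Polynomial.leadingCoeff_mul, hPm.leadingCoeff,
      hPlc, hRlc] at hlc2
    have hRlc0 : (P - Q).leadingCoeff ≠ 0 := Polynomial.leadingCoeff_ne_zero.2 hR0
    have hEq : (P - Q).natDegree = P.natDegree := by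
      simp only [hPm.leadingCoeff, one_mul] at hlc2
      exact_mod_cast mul_left_cancel₀ hRlc0 hlc2
    have hlt : (P - Q).natDegree < P.natDegree :=
      Polynomial.natDegree_lt_natDegree hR0 hdeglt
    omega
end

section
/- Let r₁,…,rₙ ∈ ℂ be distinct with positive integers m₁,…,mₙ satisfying m₁+⋯+mₙ ≥ 2, and let s₁,…,s_p ∈ ℂ be distinct with positive integers k₁,…,k_p satisfying k₁+⋯+k_p ≥ 2; let f and g be the corresponding reduced Newton maps. Suppose α, β, γ, δ ∈ ℂ satisfy αδ − βγ ≠ 0, and suppose there is a finite set F ⊂ ℂ such that for every z ∉ F all of the following hold: the denominator of f at z is nonzero, γz + δ ≠ 0, the denominator of g at (αz+β)/(γz+δ) is nonzero, γ·f(z) + δ ≠ 0, and (α·f(z)+β)/(γ·f(z)+δ) = g((αz+β)/(γz+δ)). Then γ = 0; i.e., any Möbius transformation conjugating two reduced Newton maps is affine. -/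
open Finset

/-- The denominator `∑ i, m i * ∏_{j ≠ i} (z - r j)` of the reduced Newton map. -/
noncomputable def newtonDenom (n : ℕ) (r : Fin n → ℂ) (m : Fin n → ℕ) (z : ℂ) : ℂ :=
  ∑ i : Fin n, (m i : ℂ) * ∏ j ∈ univ.erase i, (z - r j)

/-- The reduced Newton map `z - ∏ j (z - r j) / ∑ i, m i * ∏_{j ≠ i} (z - r j)`. -/
noncomputable def reducedNewton (n : ℕ) (r : Fin n → ℂ) (m : Fin n → ℕ) (z : ℂ) : ℂ :=
  z - (∏ j : Fin n, (z - r j)) / newtonDenom n r m z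

open Polynomial in
/-- Any Möbius transformation `z ↦ (αz+β)/(γz+δ)` (with `αδ - βγ ≠ 0`) conjugating
one nonconstant reduced Newton map `f` to another `g` — in the sense that
`(α f(z) + β)/(γ f(z) + δ) = g((αz+β)/(γz+δ))` for all `z` outside some finite set
on which all denominators are nonzero — must be affine, i.e. `γ = 0`. -/
theorem mobius_conjugating_newton_maps_is_affine
    (n p : ℕ) (r : Fin n → ℂ) (hr : Function.Injective r)
    (m : Fin n → ℕ) (hm : ∀ i, 0 < m i) (hdm : 2 ≤ ∑ i : Fin n, m i)
    (s : Fin p → ℂ) (hs : Function.Injective s)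
    (k : Fin p → ℕ) (hk : ∀ j, 0 < k j) (hdk : 2 ≤ ∑ j : Fin p, k j)
    (α β γ δ : ℂ) (hdet : α * δ - β * γ ≠ 0)
    (F : Finset ℂ)
    (h : ∀ z : ℂ, z ∉ F →
      newtonDenom n r m z ≠ 0 ∧
      γ * z + δ ≠ 0 ∧
      newtonDenom p s k ((α * z + β) / (γ * z + δ)) ≠ 0 ∧
      γ * reducedNewton n r m z + δ ≠ 0 ∧
      (α * reducedNewton n r m z + β) / (γ * reducedNewton n r m z + δ)
        = reducedNewton p s k ((α * z + β) / (γ * z + δ))) :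
    γ = 0 := by
  classical
  by_contra hγ
  -- p ≥ 1
  have hp0 : p ≠ 0 := by rintro rfl; simp at hdk
  obtain ⟨q, rfl⟩ : ∃ q, p = q + 1 := ⟨p - 1, by omega⟩
  -- the pole of the Möbius map
  set z₀ : ℂ := -δ / γ with hz₀def
  have hgz₀ : γ * z₀ + δ = 0 := by rw [hz₀def]; field_simp; ring
  set u : ℂ := α * z₀ + β with hudef
  have hu : u ≠ 0 := by
    rw [hudef, hz₀def]
    intro h0
    apply hdet
    field_simp at h0
    linear_combination -h0
  -- polynomials
  set P : Polynomial ℂ := ∏ j : Fin n, (X - C (r j)) with hP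
  set D : Polynomial ℂ := ∑ i : Fin n, C (m i : ℂ) * ∏ j ∈ univ.erase i, (X - C (r j)) with hD
  set N : Polynomial ℂ := X * D - P with hN
  set B : Fin (q + 1) → Polynomial ℂ :=
    fun l => C (α - s l * γ) * X + C (β - s l * δ) with hB
  set Qt : Polynomial ℂ := ∏ l, B l with hQt
  set Et : Polynomial ℂ := ∑ j, C (k j : ℂ) * ∏ l ∈ univ.erase j, B l with hEt
  set Nt : Polynomial ℂ := (C α * X + C β) * Et - Qt with hNt
  -- evaluation lemmas
  have hPe : ∀ z : ℂ, P.eval z = ∏ j : Fin n, (z - r j) := by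
    intro z; rw [hP, eval_prod]; simp
  have hDe : ∀ z : ℂ, D.eval z = newtonDenom n r m z := by
    intro z; rw [hD, eval_finset_sum, newtonDenom]
    refine Finset.sum_congr rfl fun i _ => ?_
    rw [eval_mul, eval_C, eval_prod]; simp
  have hNe : ∀ z : ℂ, N.eval z = z * newtonDenom n r m z - ∏ j : Fin n, (z - r j) := by
    intro z; rw [hN, eval_sub, eval_mul, eval_X, hDe, hPe]
  have hBe : ∀ z : ℂ, γ * z + δ ≠ 0 → ∀ l,
      (B l).eval z = (γ * z + δ) * ((α * z + β) / (γ * z + δ) - s l) := by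
    intro z hz l
    rw [hB]
    simp only [eval_add, eval_mul, eval_C, eval_X]
    field_simp
    ring
  have hQte : ∀ z : ℂ, γ * z + δ ≠ 0 →
      Qt.eval z = (γ * z + δ) ^ (q + 1) * ∏ l, ((α * z + β) / (γ * z + δ) - s l) := by
    intro z hz
    rw [hQt, eval_prod, Finset.prod_congr rfl fun l _ => hBe z hz l,
      Finset.prod_mul_distrib, Finset.prod_const, Finset.card_univ, Fintype.card_fin]
  have hEte : ∀ z : ℂ, γ * z + δ ≠ 0 →
      Et.eval z = (γ * z + δ) ^ q * newtonDenom (q + 1) s k ((α * z + β) / (γ * z + δ)) := by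
    intro z hz
    rw [hEt, eval_finset_sum, newtonDenom, Finset.mul_sum]
    refine Finset.sum_congr rfl fun j _ => ?_
    rw [eval_mul, eval_C, eval_prod, Finset.prod_congr rfl fun l _ => hBe z hz l,
      Finset.prod_mul_distrib, Finset.prod_const,
      Finset.card_erase_of_mem (Finset.mem_univ j), Finset.card_univ, Fintype.card_fin]
    simp only [Nat.add_sub_cancel]
    ring
  -- the main polynomial identity
  have key : (C α * N + C β * D) * (C γ * X + C δ) * Et = (C γ * N + C δ * D) * Nt := by
    apply Polynomial.eq_of_infinite_eval_eq
    apply Set.Infinite.mono (s := (↑F : Set ℂ)ᶜ)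
    swap
    · exact Set.Finite.infinite_compl F.finite_toSet
    intro z hz
    have hzF : z ∉ F := by simpa using hz
    obtain ⟨h1, h2, h3, h4, h5⟩ := h z hzF
    simp only [Set.mem_setOf_eq]
    set gz : ℂ := γ * z + δ with hgz
    set w : ℂ := (α * z + β) / gz with hw
    set Dz : ℂ := newtonDenom n r m z with hDz
    set Pz : ℂ := ∏ j : Fin n, (z - r j) with hPz
    set Ew : ℂ := newtonDenom (q + 1) s k w with hEw
    set Qw : ℂ := ∏ l, (w - s l) with hQw
    set fz : ℂ := reducedNewton n r m z with hfz
    have hwgz : w * gz = α * z + β := div_mul_cancel₀ _ h2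
    have hfzD : fz * Dz = z * Dz - Pz := by
      rw [hfz, reducedNewton, ← hDz, ← hPz]
      field_simp
    have e0 : α * fz + β = (γ * fz + δ) * (w - Qw / Ew) := by
      rw [div_eq_iff h4] at h5
      rw [h5, reducedNewton, ← hEw, ← hQw]
      ring
    have e1 : (α * fz + β) * Ew = (γ * fz + δ) * (w * Ew - Qw) := by
      have hc : Qw / Ew * Ew = Qw := div_mul_cancel₀ _ h3
      linear_combination Ew * e0 - (γ * fz + δ) * hc
    have goal' : (α * (z * Dz - Pz) + β * Dz) * gz * (gz ^ q * Ew)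
        = (γ * (z * Dz - Pz) + δ * Dz) * ((α * z + β) * (gz ^ q * Ew) - gz ^ (q + 1) * Qw) := by
      rw [← hwgz, ← hfzD]
      linear_combination gz ^ (q + 1) * Dz * e1
    calc Polynomial.eval z ((C α * N + C β * D) * (C γ * X + C δ) * Et)
        = (α * (z * Dz - Pz) + β * Dz) * gz * (gz ^ q * Ew) := by
          rw [eval_mul, eval_mul, eval_add, eval_add, eval_mul, eval_mul, eval_mul,
            eval_C, eval_C, eval_C, eval_C, eval_X, hNe, hDe, hEte z h2]
      _ = (γ * (z * Dz - Pz) + δ * Dz) * ((α * z + β) * (gz ^ q * Ew) - gz ^ (q + 1) * Qw) :=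
          goal'
      _ = Polynomial.eval z ((C γ * N + C δ * D) * Nt) := by
          rw [hNt, eval_mul, eval_sub, eval_mul, eval_add, eval_add, eval_mul, eval_mul,
            eval_mul, eval_C, eval_C, eval_C, eval_C, eval_X, hNe, hDe, hEte z h2, hQte z h2]
  -- evaluations at the pole z₀
  have hB₀ : ∀ l, (B l).eval z₀ = u := by
    intro l
    rw [hB]
    simp only [eval_add, eval_mul, eval_C, eval_X]
    rw [hudef]
    linear_combination (-(s l)) * hgz₀
  have hQt₀ : Qt.eval z₀ = u ^ (q + 1) := by
    rw [hQt, eval_prod, Finset.prod_congr rfl fun l _ => hB₀ l, Finset.prod_const,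
      Finset.card_univ, Fintype.card_fin]
  set e : ℂ := ((∑ j : Fin (q + 1), k j : ℕ) : ℂ) with he
  have hEt₀ : Et.eval z₀ = e * u ^ q := by
    rw [hEt, eval_finset_sum]
    have : ∀ j : Fin (q + 1), Polynomial.eval z₀ (C (k j : ℂ) * ∏ l ∈ univ.erase j, B l)
        = (k j : ℂ) * u ^ q := by
      intro j
      rw [eval_mul, eval_C, eval_prod, Finset.prod_congr rfl fun l _ => hB₀ l,
        Finset.prod_const, Finset.card_erase_of_mem (Finset.mem_univ j),
        Finset.card_univ, Fintype.card_fin]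
      simp only [Nat.add_sub_cancel]
    rw [Finset.sum_congr rfl fun j _ => this j, ← Finset.sum_mul, he]
    push_cast
    ring
  have hNt₀ : Nt.eval z₀ = (e - 1) * u ^ (q + 1) := by
    rw [hNt, eval_sub, eval_mul, eval_add, eval_mul, eval_C, eval_C, eval_X, hEt₀, hQt₀,
      ← hudef]
    ring
  have hNt₀ne : Nt.eval z₀ ≠ 0 := by
    rw [hNt₀]
    apply mul_ne_zero _ (pow_ne_zero _ hu)
    have : e ≠ 1 := by
      rw [he]
      exact_mod_cast (by omega : (∑ j : Fin (q + 1), k j) ≠ 1)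
    exact sub_ne_zero.mpr this
  -- z₀ is a root of P
  have hPz₀ : P.eval z₀ = 0 := by
    have h0 : Polynomial.eval z₀ ((C α * N + C β * D) * (C γ * X + C δ) * Et)
        = Polynomial.eval z₀ ((C γ * N + C δ * D) * Nt) := by rw [key]
    simp only [eval_mul, eval_add, eval_C, eval_X] at h0
    rw [hgz₀, mul_zero, zero_mul] at h0
    have h1 : γ * Polynomial.eval z₀ N + δ * Polynomial.eval z₀ D = 0 :=
      (mul_eq_zero.mp h0.symm).resolve_right hNt₀ne
    rw [hNe, hDe] at h1
    rw [hPe]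
    have hγP : γ * ∏ j : Fin n, (z₀ - r j) = 0 := by
      linear_combination (newtonDenom n r m z₀) * hgz₀ - h1
    exact (mul_eq_zero.mp hγP).resolve_left hγ
  obtain ⟨i₀, -, hi₀⟩ := Finset.prod_eq_zero_iff.mp (by rw [← hPe]; exact hPz₀)
  have hz₀r : z₀ = r i₀ := by linear_combination hi₀
  -- factor out C γ * (X - C (r i₀)) from both sides
  set P₁ : Polynomial ℂ := ∏ j ∈ univ.erase i₀, (X - C (r j)) with hP₁
  have hPfac : P = (X - C (r i₀)) * P₁ := by
    rw [hP, hP₁]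
    exact (Finset.mul_prod_erase univ (fun j => X - C (r j)) (Finset.mem_univ i₀)).symm
  have hcr : γ * r i₀ + δ = 0 := by rw [← hz₀r]; exact hgz₀
  have hcrC : (C γ * C (r i₀) + C δ : Polynomial ℂ) = 0 := by
    rw [← C_mul, ← C_add, hcr, C_0]
  have hfacL : (C γ * X + C δ : Polynomial ℂ) = C γ * (X - C (r i₀)) := by
    linear_combination hcrC
  have hfacN : C γ * N + C δ * D = (C γ * (X - C (r i₀))) * (D - P₁) := by
    rw [hN, hPfac]
    linear_combination D * hcrC
  have hne : (C γ * (X - C (r i₀)) : Polynomial ℂ) ≠ 0 :=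
    mul_ne_zero (Polynomial.C_ne_zero.mpr hγ) (Polynomial.X_sub_C_ne_zero _)
  have key2 : (C α * N + C β * D) * Et = (D - P₁) * Nt := by
    apply mul_left_cancel₀ hne
    calc (C γ * (X - C (r i₀))) * ((C α * N + C β * D) * Et)
        = (C α * N + C β * D) * (C γ * X + C δ) * Et := by rw [hfacL]; ring
      _ = (C γ * N + C δ * D) * Nt := key
      _ = (C γ * (X - C (r i₀))) * ((D - P₁) * Nt) := by rw [hfacN]; ring
  -- evaluate key2 at z₀
  have hP₁z₀ne : P₁.eval z₀ ≠ 0 := by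
    rw [hP₁, eval_prod]
    rw [Finset.prod_ne_zero_iff]
    intro j hj
    simp only [eval_sub, eval_X, eval_C]
    rw [hz₀r]
    exact sub_ne_zero.mpr (fun hconl => (Finset.mem_erase.mp hj).1 (hr hconl.symm))
  have hDz₀ : D.eval z₀ = (m i₀ : ℂ) * P₁.eval z₀ := by
    rw [hD, eval_finset_sum]
    rw [Finset.sum_eq_single i₀]
    · rw [eval_mul, eval_C, hP₁, eval_prod]
    · intro i _ hii₀
      rw [eval_mul, eval_prod]
      apply mul_eq_zero_of_right
      apply Finset.prod_eq_zero
        (Finset.mem_erase.mpr ⟨fun hh => hii₀ hh.symm, Finset.mem_univ i₀⟩)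
      rw [eval_sub, eval_X, eval_C, hz₀r, sub_self]
    · intro hni; exact absurd (Finset.mem_univ i₀) hni
  have hNz₀ : N.eval z₀ = z₀ * D.eval z₀ := by
    rw [hN, eval_sub, eval_mul, eval_X, hPz₀, sub_zero]
  have h2' : Polynomial.eval z₀ ((C α * N + C β * D) * Et)
      = Polynomial.eval z₀ ((D - P₁) * Nt) := by rw [key2]
  rw [eval_mul, eval_mul, eval_sub, eval_add, eval_mul, eval_mul, eval_C, eval_C, hNz₀,
    hDz₀, hEt₀, hNt₀] at h2'
  -- extract the multiplier equation
  set M : ℂ := (m i₀ : ℂ) with hM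
  have hfin : M * e * (P₁.eval z₀ * u ^ (q + 1)) = (M - 1) * (e - 1) * (P₁.eval z₀ * u ^ (q + 1)) := by
    have hzu : α * z₀ + β = u := hudef.symm
    linear_combination h2' - (e * u ^ q * M * P₁.eval z₀) * hzu
  have hMe : M * e = (M - 1) * (e - 1) :=
    mul_right_cancel₀ (mul_ne_zero hP₁z₀ne (pow_ne_zero _ hu)) hfin
  have hsum : M + e = 1 := by linear_combination hMe
  have hcast : ((m i₀ : ℕ) : ℂ) + ((∑ j : Fin (q + 1), k j : ℕ) : ℂ) = 1 := by
    rw [← hM, ← he]; exact hsum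
  have hnat : m i₀ + ∑ j : Fin (q + 1), k j = 1 := by exact_mod_cast hcast
  have := hm i₀
  omega
end

section
/- Let r₁,…,rₙ ∈ ℂ be distinct with positive integers m₁,…,mₙ, let s₁,…,s_p ∈ ℂ be distinct with positive integers k₁,…,k_p, and let f and g be the corresponding reduced Newton maps. Then the following are equivalent: (i) there exist a ∈ ℂ∖{0} and b ∈ ℂ such that g(az+b) = a·f(z) + b for every z ∈ ℂ outside a finite set (on which all denominators are nonzero); (ii) there exist a ∈ ℂ∖{0}, b ∈ ℂ and a bijection σ of the index sets such that a·rᵢ + b = s_{σ(i)} and mᵢ = k_{σ(i)} for every i. That is, two (possibly degenerate) Newton maps are affinely conjugate if and only if some affine map carries the fixed points of one to the fixed points of the other matching the corresponding multiplicities (depths plus one). -/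
open Finset

lemma newtonDenom_continuous (n : ℕ) (r : Fin n → ℂ) (m : Fin n → ℕ) :
    Continuous (newtonDenom n r m) := by
  unfold newtonDenom
  exact continuous_finset_sum _ fun i _ =>
    continuous_const.mul (continuous_finset_prod _ fun j _ => continuous_id.sub continuous_const)

lemma newtonDenom_eval (n : ℕ) (r : Fin n → ℂ) (m : Fin n → ℕ) (i : Fin n) :
    newtonDenom n r m (r i) = (m i : ℂ) * ∏ j ∈ univ.erase i, (r i - r j) := by
  unfold newtonDenom
  rw [Finset.sum_eq_single i]
  · intro i' _ hne
    rw [Finset.prod_eq_zero (Finset.mem_erase.2 ⟨hne.symm, Finset.mem_univ i⟩) (sub_self (r i)),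
      mul_zero]
  · intro h; exact absurd (Finset.mem_univ i) h

lemma erase_prod_ne_zero {n : ℕ} {r : Fin n → ℂ} (hr : Function.Injective r) (i : Fin n) :
    ∏ j ∈ univ.erase i, (r i - r j) ≠ 0 := by
  refine Finset.prod_ne_zero_iff.2 fun j hj => sub_ne_zero.2 fun h => ?_
  exact (Finset.mem_erase.1 hj).1 (hr h).symm

lemma newtonDenom_eval_ne_zero {n : ℕ} {r : Fin n → ℂ} (hr : Function.Injective r)
    {m : Fin n → ℕ} (hm : ∀ i, 0 < m i) (i : Fin n) :
    newtonDenom n r m (r i) ≠ 0 := by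
  rw [newtonDenom_eval]
  exact mul_ne_zero (Nat.cast_ne_zero.2 (hm i).ne') (erase_prod_ne_zero hr i)

lemma exists_denom_finset {n : ℕ} (hn : 1 ≤ n) {r : Fin n → ℂ} (hr : Function.Injective r)
    {m : Fin n → ℕ} (hm : ∀ i, 0 < m i) :
    ∃ F : Finset ℂ, ∀ z ∉ F, newtonDenom n r m z ≠ 0 := by
  set pol : Polynomial ℂ :=
    ∑ i : Fin n, Polynomial.C (m i : ℂ) * ∏ j ∈ univ.erase i, (Polynomial.X - Polynomial.C (r j))
    with hpol
  have heval : ∀ z, pol.eval z = newtonDenom n r m z := by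
    intro z
    simp [hpol, newtonDenom, Polynomial.eval_finset_sum, Polynomial.eval_prod]
  have hne : pol ≠ 0 := by
    intro h
    have h2 := newtonDenom_eval_ne_zero hr hm ⟨0, hn⟩
    rw [← heval, h] at h2
    simp at h2
  refine ⟨(Polynomial.finite_setOf_isRoot hne).toFinset, fun z hz => ?_⟩
  rw [Set.Finite.mem_toFinset] at hz
  rw [← heval]
  exact hz

section
variable {n : ℕ} {a b : ℂ} {r s : Fin n → ℂ}

lemma erase_image (σ : Fin n ≃ Fin n) (i : Fin n) :
    univ.erase (σ i) = (univ.erase i).image σ := by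
  ext l
  simp only [Finset.mem_erase, Finset.mem_univ, and_true, Finset.mem_image]
  constructor
  · intro hl
    exact ⟨σ.symm l, fun h => hl (by rw [← σ.apply_symm_apply l, h]), σ.apply_symm_apply l⟩
  · rintro ⟨j, hj, rfl⟩
    exact fun h => hj (σ.injective h)

lemma eraseProd (σ : Fin n ≃ Fin n) (hσ : ∀ i, a * r i + b = s (σ i)) (i : Fin n) (z : ℂ) :
    ∏ l ∈ univ.erase (σ i), (a * z + b - s l) = a ^ (n - 1) * ∏ j ∈ univ.erase i, (z - r j) := by
  rw [erase_image σ i, Finset.prod_image (fun x _ y _ h => σ.injective h)]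
  rw [Finset.prod_congr rfl (fun j _ => show a * z + b - s (σ j) = a * (z - r j) by
    rw [← hσ j]; ring)]
  rw [Finset.prod_mul_distrib, Finset.prod_const,
    Finset.card_erase_of_mem (Finset.mem_univ i), Finset.card_univ, Fintype.card_fin]

lemma prodQ (σ : Fin n ≃ Fin n) (hσ : ∀ i, a * r i + b = s (σ i)) (z : ℂ) :
    ∏ j : Fin n, (a * z + b - s j) = a ^ n * ∏ j : Fin n, (z - r j) := by
  rw [← Equiv.prod_comp σ (fun j => a * z + b - s j)]
  rw [Finset.prod_congr rfl (fun j _ => show a * z + b - s (σ j) = a * (z - r j) by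
    rw [← hσ j]; ring)]
  rw [Finset.prod_mul_distrib, Finset.prod_const, Finset.card_univ, Fintype.card_fin]

end

lemma denomConj {n : ℕ} {a b : ℂ} {r s : Fin n → ℂ} {m k : Fin n → ℕ}
    (σ : Fin n ≃ Fin n) (hσ1 : ∀ i, a * r i + b = s (σ i)) (hσ2 : ∀ i, m i = k (σ i)) (z : ℂ) :
    newtonDenom n s k (a * z + b) = a ^ (n - 1) * newtonDenom n r m z := by
  unfold newtonDenom
  rw [← Equiv.sum_comp σ (fun j => (k j : ℂ) * ∏ l ∈ univ.erase j, (a * z + b - s l)),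
    Finset.mul_sum]
  refine Finset.sum_congr rfl fun i _ => ?_
  rw [eraseProd σ hσ1 i z, ← hσ2 i]; ring

/-- Two (possibly degenerate) Newton maps, given by root data `(r, m)` and `(s, k)`,
are affinely conjugate if and only if some affine map carries the roots of one to
the roots of the other, matching multiplicities. -/
theorem newton_maps_affinely_conjugate_iff
    (n p : ℕ) (hn : 1 ≤ n) (hp : 1 ≤ p)
    (r : Fin n → ℂ) (hr : Function.Injective r)
    (m : Fin n → ℕ) (hm : ∀ i, 0 < m i)
    (s : Fin p → ℂ) (hs : Function.Injective s)
    (k : Fin p → ℕ) (hk : ∀ j, 0 < k j) :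
    (∃ a b : ℂ, a ≠ 0 ∧ ∃ F : Finset ℂ, ∀ z : ℂ, z ∉ F →
        newtonDenom n r m z ≠ 0 ∧
        newtonDenom p s k (a * z + b) ≠ 0 ∧
        reducedNewton p s k (a * z + b) = a * reducedNewton n r m z + b) ↔
    (∃ a b : ℂ, a ≠ 0 ∧ ∃ σ : Fin n ≃ Fin p,
        ∀ i, a * r i + b = s (σ i) ∧ m i = k (σ i)) := by
  constructor
  · rintro ⟨a, b, ha, F, hF⟩
    have hcontE : Continuous fun z : ℂ => newtonDenom p s k (a * z + b) :=
      (newtonDenom_continuous p s k).comp (by fun_prop)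
    have hcontQ : Continuous fun z : ℂ => ∏ j : Fin p, (a * z + b - s j) :=
      continuous_finset_prod _ fun j _ => by fun_prop
    have hcontP : Continuous fun z : ℂ => ∏ j : Fin n, (z - r j) :=
      continuous_finset_prod _ fun j _ => by fun_prop
    have hdense : Dense ((F : Set ℂ)ᶜ) := ((F : Set ℂ).toFinite.countable).dense_compl ℂ
    have key : ∀ z : ℂ, (∏ j : Fin p, (a * z + b - s j)) * newtonDenom n r m z
        = a * (∏ j : Fin n, (z - r j)) * newtonDenom p s k (a * z + b) := by
      have hfun : (fun z : ℂ => (∏ j : Fin p, (a * z + b - s j)) * newtonDenom n r m z)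
          = fun z : ℂ => a * (∏ j : Fin n, (z - r j)) * newtonDenom p s k (a * z + b) := by
        refine Continuous.ext_on hdense
          (hcontQ.mul (newtonDenom_continuous n r m))
          ((continuous_const.mul hcontP).mul hcontE) ?_
        intro z hz
        obtain ⟨hD, hE, heq⟩ := hF z hz
        unfold reducedNewton at heq
        field_simp at heq
        linear_combination -heq
      exact fun z => congrFun hfun z
    -- build the bijection
    have hroot : ∀ i : Fin n, ∃ j : Fin p, a * r i + b = s j := by
      intro i
      have hki := key (r i)
      rw [Finset.prod_eq_zero (Finset.mem_univ i) (sub_self (r i))] at hki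
      have hD := newtonDenom_eval_ne_zero hr hm i
      have hQ : ∏ j : Fin p, (a * r i + b - s j) = 0 := by
        rcases mul_eq_zero.1 (by linear_combination hki :
          (∏ j : Fin p, (a * r i + b - s j)) * newtonDenom n r m (r i) = 0) with h | h
        · exact h
        · exact absurd h hD
      obtain ⟨j, -, hj⟩ := Finset.prod_eq_zero_iff.1 hQ
      exact ⟨j, by linear_combination hj⟩
    choose σ0 hσ0 using hroot
    have hinj : Function.Injective σ0 := by
      intro i i' h
      apply hr
      have h2 : a * r i + b = a * r i' + b := by rw [hσ0 i, hσ0 i', h]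
      have := mul_left_cancel₀ ha (by linear_combination h2 : a * r i = a * r i')
      exact this
    have hsurj : Function.Surjective σ0 := by
      intro j
      set z := (s j - b) / a with hzdef
      have hz : a * z + b = s j := by rw [hzdef]; field_simp; ring
      have hkz := key z
      rw [Finset.prod_eq_zero (Finset.mem_univ j) (by rw [hz, sub_self])] at hkz
      have hE : newtonDenom p s k (a * z + b) ≠ 0 := by
        rw [hz]; exact newtonDenom_eval_ne_zero hs hk j
      have hP : ∏ l : Fin n, (z - r l) = 0 := by
        rw [zero_mul] at hkz
        rcases mul_eq_zero.1 hkz.symm with h | h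
        · rcases mul_eq_zero.1 h with h' | h'
          · exact absurd h' ha
          · exact h'
        · exact absurd h hE
      obtain ⟨i, -, hi⟩ := Finset.prod_eq_zero_iff.1 hP
      refine ⟨i, hs ?_⟩
      rw [← hσ0 i, ← hz]
      rw [sub_eq_zero] at hi
      rw [hi]
    have hnp : n = p := by
      simpa using Fintype.card_congr (Equiv.ofBijective σ0 ⟨hinj, hsurj⟩)
    subst hnp
    set σ : Fin n ≃ Fin n := Equiv.ofBijective σ0 ⟨hinj, hsurj⟩ with hσdef
    have hσ1 : ∀ i, a * r i + b = s (σ i) := hσ0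
    refine ⟨a, b, ha, σ, fun i => ⟨hσ1 i, ?_⟩⟩
    -- multiplicities
    have key2 : ∀ z : ℂ, (a ^ n * ∏ j : Fin n, (z - r j)) * newtonDenom n r m z
        = a * (∏ j : Fin n, (z - r j)) * newtonDenom n s k (a * z + b) := by
      intro z
      rw [← prodQ σ hσ1 z]
      exact key z
    have hEeq : ∀ z : ℂ, newtonDenom n s k (a * z + b)
        = a ^ (n - 1) * newtonDenom n r m z := by
      have hdense2 : Dense ((↑(univ.image r) : Set ℂ)ᶜ) :=
        ((↑(univ.image r) : Set ℂ).toFinite.countable).dense_compl ℂ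
      have hfun : (fun z : ℂ => newtonDenom n s k (a * z + b))
          = fun z : ℂ => a ^ (n - 1) * newtonDenom n r m z := by
        refine Continuous.ext_on hdense2 hcontE
          (continuous_const.mul (newtonDenom_continuous n r m)) ?_
        intro z hz
        have hP : (∏ j : Fin n, (z - r j)) ≠ 0 := by
          refine Finset.prod_ne_zero_iff.2 fun j _ => sub_ne_zero.2 fun h => ?_
          exact hz (by simp only [Finset.coe_image, Set.mem_image]; exact ⟨j, by simp, h.symm⟩)
        have h2 := key2 z
        have han : a ^ n = a * a ^ (n - 1) := by
          conv_lhs => rw [show n = (n - 1) + 1 by omega]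
          rw [pow_succ']
        apply mul_left_cancel₀ (mul_ne_zero ha hP)
        show a * (∏ j : Fin n, (z - r j)) * newtonDenom n s k (a * z + b)
          = a * (∏ j : Fin n, (z - r j)) * (a ^ (n - 1) * newtonDenom n r m z)
        rw [← h2, han]
        ring
      exact fun z => congrFun hfun z
    have h1 := hEeq (r i)
    rw [hσ1 i, newtonDenom_eval n s k (σ i), newtonDenom_eval n r m i] at h1
    have h2 : ∏ l ∈ univ.erase (σ i), (s (σ i) - s l)
        = a ^ (n - 1) * ∏ j ∈ univ.erase i, (r i - r j) := by
      have := eraseProd σ hσ1 i (r i)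
      rwa [hσ1 i] at this
    rw [h2] at h1
    have hne : a ^ (n - 1) * ∏ j ∈ univ.erase i, (r i - r j) ≠ 0 :=
      mul_ne_zero (pow_ne_zero _ ha) (erase_prod_ne_zero hr i)
    have : (k (σ i) : ℂ) = (m i : ℂ) := by
      apply mul_right_cancel₀ hne
      linear_combination h1
    exact_mod_cast this.symm
  · rintro ⟨a, b, ha, σ, hσ⟩
    have hnp : n = p := by simpa using Fintype.card_congr σ
    subst hnp
    obtain ⟨F, hF⟩ := exists_denom_finset hn hr hm
    refine ⟨a, b, ha, F, fun z hz => ?_⟩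
    have hD := hF z hz
    have hE := denomConj σ (fun i => (hσ i).1) (fun i => (hσ i).2) z
    have han : a ^ (n - 1) ≠ 0 := pow_ne_zero _ ha
    refine ⟨hD, by rw [hE]; exact mul_ne_zero han hD, ?_⟩
    unfold reducedNewton
    rw [hE, prodQ σ (fun i => (hσ i).1) z,
      show a ^ n = a * a ^ (n - 1) by
        conv_lhs => rw [show n = (n - 1) + 1 by omega]
        rw [pow_succ']]
    field_simp
    ring
end
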